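/- arXiv:1506.02827 — 4 statements merged into one kernel-verified Lean document; each statement's English description precedes it below -/
import Mathlib

section
/- The locally resonant granular chain ü_n = (u_{n−1} − u_n)_+^α − (u_n − u_{n+1})_+^α − κ(u_n − v_n), ρv̈_n = κ(u_n − v_n) (n ∈ ℤ, α > 1, κ, ρ > 0) admits no nontrivial time-periodic bright breather: if (u,v) is a T-periodic solution with ‖u_n − u_{n−1}‖_{L^∞(0,T)} → 0 as n → ±∞, then (u_{n−1}(t) − u_n(t))_+ = 0 for all n and t, i.e. the Hertzian interaction forces vanish identically and (u,v) solves the linear uncoupled system ü_n = κ(v_n − u_n), ρv̈_n = κ(u_n − v_n). -/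
open MeasureTheory

lemma aux_periodic_deriv {f : ℝ → ℝ} {T : ℝ} (hp : Function.Periodic f T) :
    Function.Periodic (deriv f) T := by
  intro x
  have h := deriv_comp_add_const f T x
  have h2 : (fun y => f (y + T)) = f := funext fun y => hp y
  rw [h2] at h
  exact h.symm

lemma aux_int_deriv2 {f : ℝ → ℝ} {T : ℝ} (hf : ContDiff ℝ 2 f) (hp : Function.Periodic f T) :
    ∫ t in (0:ℝ)..T, deriv (deriv f) t = 0 := by
  have hf' : ContDiff ℝ ((1 : ℕ) + 1) f := by exact_mod_cast hf
  have h1 : ContDiff ℝ 1 (deriv f) := (contDiff_succ_iff_deriv.mp hf').2.2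
  have hdiff : Differentiable ℝ (deriv f) := h1.differentiable one_ne_zero
  have hcont : Continuous (deriv (deriv f)) := h1.continuous_deriv le_rfl
  rw [intervalIntegral.integral_deriv_eq_sub (fun x _ => hdiff x)
    (hcont.intervalIntegrable _ _)]
  have : deriv f T = deriv f 0 := by
    have := aux_periodic_deriv hp 0
    simpa using this
  rw [this, sub_self]

/-- the locally resonant granular chain admits no nontrivial
time-periodic bright breather: for a T-periodic C² solution whose strains decay
at spatial infinity (uniformly in time), all Hertzian interaction forces vanish
identically and the solution solves the linear uncoupled system. -/
theorem stmt5 (α κ ρ T : ℝ) (hα : 1 < α) (hκ : 0 < κ) (hρ : 0 < ρ) (hT : 0 < T)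
    (u v : ℤ → ℝ → ℝ)
    (hu2 : ∀ n, ContDiff ℝ 2 (u n)) (hv2 : ∀ n, ContDiff ℝ 2 (v n))
    (hperu : ∀ n, Function.Periodic (u n) T)
    (hperv : ∀ n, Function.Periodic (v n) T)
    (heq1 : ∀ n t, deriv (deriv (u n)) t =
      (max (u (n-1) t - u n t) 0) ^ α - (max (u n t - u (n+1) t) 0) ^ α
        - κ * (u n t - v n t))
    (heq2 : ∀ n t, ρ * deriv (deriv (v n)) t = κ * (u n t - v n t))
    (hdecay : ∀ ε > (0:ℝ), ∃ N : ℕ, ∀ n : ℤ, (N : ℤ) ≤ |n| →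
      ∀ t : ℝ, |u n t - u (n-1) t| ≤ ε) :
    (∀ n t, max (u (n-1) t - u n t) 0 = 0) ∧
    (∀ n t, deriv (deriv (u n)) t = κ * (v n t - u n t)) ∧
    (∀ n t, ρ * deriv (deriv (v n)) t = κ * (u n t - v n t)) := by
  have hα0 : (0:ℝ) ≤ α := by linarith
  set G : ℤ → ℝ → ℝ := fun n t => (max (u (n-1) t - u n t) 0) ^ α with hGdef
  have hGcont : ∀ n, Continuous (G n) := by
    intro n
    have hmax : Continuous fun t => max (u (n-1) t - u n t) 0 :=
      ((hu2 _).continuous.sub (hu2 _).continuous).max continuous_const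
    exact (Real.continuous_rpow_const hα0).comp hmax
  have hGnn : ∀ n t, 0 ≤ G n t := fun n t => Real.rpow_nonneg (le_max_right _ _) α
  have hGsucc : ∀ n t, G (n+1) t = (max (u n t - u (n+1) t) 0) ^ α := by
    intro n t
    simp only [hGdef, add_sub_cancel_right]
  set I : ℤ → ℝ := fun n => ∫ t in (0:ℝ)..T, G n t with hIdef
  have hIint : ∀ n, IntervalIntegrable (G n) volume 0 T :=
    fun n => (hGcont n).intervalIntegrable _ _
  have hstep : ∀ n, I n - I (n+1) = 0 := by
    intro n
    have key : ∀ t, G n t - G (n+1) t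
        = deriv (deriv (u n)) t + ρ * deriv (deriv (v n)) t := by
      intro t
      have e1 := heq1 n t
      have e2 := heq2 n t
      rw [hGsucc]
      simp only [hGdef]
      linarith
    have hu'' : Continuous (deriv (deriv (u n))) := by
      have hf' : ContDiff ℝ ((1 : ℕ) + 1) (u n) := by exact_mod_cast hu2 n
      exact (contDiff_succ_iff_deriv.mp hf').2.2.continuous_deriv le_rfl
    have hv'' : Continuous (deriv (deriv (v n))) := by
      have hf' : ContDiff ℝ ((1 : ℕ) + 1) (v n) := by exact_mod_cast hv2 n
      exact (contDiff_succ_iff_deriv.mp hf').2.2.continuous_deriv le_rfl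
    have h0 : ∫ t in (0:ℝ)..T,
        (deriv (deriv (u n)) t + ρ * deriv (deriv (v n)) t) = 0 := by
      rw [intervalIntegral.integral_add (g := fun t => ρ * deriv (deriv (v n)) t) (hu''.intervalIntegrable _ _)
        (((continuous_const.mul hv'' : Continuous fun t => ρ * deriv (deriv (v n)) t)).intervalIntegrable _ _),
        intervalIntegral.integral_const_mul,
        aux_int_deriv2 (hu2 n) (hperu n), aux_int_deriv2 (hv2 n) (hperv n)]
      ring
    have hsub : ∫ t in (0:ℝ)..T, (G n t - G (n+1) t) = 0 := by
      simp only [key]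
      exact h0
    rw [intervalIntegral.integral_sub (hIint n) (hIint (n+1))] at hsub
    exact hsub
  have hIconst : ∀ n, I n = I 0 := by
    intro n
    induction n using Int.induction_on with
    | zero => rfl
    | succ k ih =>
      have := hstep (k : ℤ)
      have h' : I ((k:ℤ) + 1) = I k := by linarith
      rw [h', ih]
    | pred k ih =>
      have := hstep (-(k:ℤ) - 1)
      have h' : I (-(k:ℤ) - 1) = I (-(k:ℤ) - 1 + 1) := by linarith
      rw [show (-(k:ℤ) - 1 + 1) = -(k:ℤ) by ring] at h'
      rw [h', ih]
  have hInn : ∀ n, 0 ≤ I n :=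
    fun n => intervalIntegral.integral_nonneg hT.le (fun t _ => hGnn n t)
  have hIbound : ∀ ε > (0:ℝ), I 0 ≤ T * ε ^ α := by
    intro ε hε
    obtain ⟨N, hN⟩ := hdecay ε hε
    have hb : ∀ t ∈ Set.Icc (0:ℝ) T, G (N:ℤ) t ≤ ε ^ α := by
      intro t _
      have h1 := hN (N:ℤ) (by simp) t
      have h2 : max (u ((N:ℤ)-1) t - u (N:ℤ) t) 0 ≤ ε := by
        rcases le_total (u ((N:ℤ)-1) t - u (N:ℤ) t) 0 with h | h
        · simpa [max_eq_right h] using hε.le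
        · rw [max_eq_left h]
          have := abs_le.mp h1
          linarith [this.1]
      exact Real.rpow_le_rpow (le_max_right _ _) h2 hα0
    have hm : I (N:ℤ) ≤ ∫ _ in (0:ℝ)..T, ε ^ α :=
      intervalIntegral.integral_mono_on hT.le (hIint _)
        (intervalIntegrable_const) hb
    rw [intervalIntegral.integral_const, smul_eq_mul, sub_zero] at hm
    rw [← hIconst (N:ℤ)]
    exact hm
  have hI0 : I 0 = 0 := by
    by_contra h
    have hpos : 0 < I 0 := lt_of_le_of_ne (hInn 0) (Ne.symm h)
    set ε := (I 0 / (2 * T)) ^ (α⁻¹) with hεdef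
    have hq : 0 < I 0 / (2 * T) := by positivity
    have hεpos : 0 < ε := Real.rpow_pos_of_pos hq _
    have hεα : ε ^ α = I 0 / (2 * T) := by
      rw [hεdef, ← Real.rpow_mul hq.le, inv_mul_cancel₀ (by linarith : α ≠ 0),
        Real.rpow_one]
    have hle := hIbound ε hεpos
    rw [hεα] at hle
    have hTne : T ≠ 0 := hT.ne'
    have : T * (I 0 / (2 * T)) = I 0 / 2 := by field_simp
    rw [this] at hle
    linarith
  have hGzero : ∀ n t, G n t = 0 := by
    intro n t
    have hIn : I n = 0 := (hIconst n).trans hI0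
    have hset : ∫ s in Set.Ioc (0:ℝ) T, G n s = 0 := by
      rw [← intervalIntegral.integral_of_le hT.le]
      exact hIn
    have hae : G n =ᵐ[volume.restrict (Set.Ioc 0 T)] 0 :=
      (integral_eq_zero_iff_of_nonneg_ae (Filter.Eventually.of_forall (hGnn n))
        (hIint n).1).mp hset
    have heqOn : Set.EqOn (G n) 0 (Set.Ioc 0 T) :=
      Measure.eqOn_Ioc_of_ae_eq volume hae (hGcont n).continuousOn
        continuousOn_const
    have hGper : Function.Periodic (G n) T := by
      intro x
      simp only [hGdef, hperu (n-1) x, hperu n x]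
    obtain ⟨y, hy, hxy⟩ := hGper.exists_mem_Ico₀ hT t
    rcases eq_or_lt_of_le hy.1 with h0 | h0
    · have hT' : G n T = 0 := heqOn ⟨hT, le_rfl⟩
      have : G n y = G n T := by
        rw [← h0]
        have := hGper 0
        simpa using this.symm
      rw [hxy, this, hT']
    · rw [hxy]
      exact heqOn ⟨h0, hy.2.le⟩
  have hmax0 : ∀ n t, max (u (n-1) t - u n t) 0 = 0 := by
    intro n t
    have hG := hGzero n t
    by_contra hne
    have hpos : 0 < max (u (n-1) t - u n t) 0 :=
      lt_of_le_of_ne (le_max_right _ _) (Ne.symm hne)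
    have := Real.rpow_pos_of_pos hpos α
    rw [hGdef] at hG
    simp only at hG
    linarith
  refine ⟨hmax0, ?_, heq2⟩
  intro n t
  have e1 := heq1 n t
  have h1 := hmax0 n t
  have h2 := hmax0 (n+1) t
  rw [show ((n:ℤ)+1-1) = n by ring] at h2
  rw [h1, h2] at e1
  rw [e1, Real.zero_rpow (by linarith : α ≠ 0)]
  ring
end

section
/- Let δ⁻A_n = A_n − A_{n−1} and suppose δ⁻A_n(τ) = a e^{i(Ωτ − qn − φ)} and δ⁻B_n(τ) = b with a > 0, b ≤ 2κa. Then (A, B) solves the generalized DpS system 2iκω³ ∂_τ δ⁻A_n = δ⁺[h_α(δ⁻B_n,|δ⁻A_n|) δ⁻A_n] − δ⁺[h_α(δ⁻B_{n−1},|δ⁻A_{n−1}|) δ⁻A_{n−1}] (in strain form) if and only if Ω = (2/(κω³)) sin²(q/2) h_α(b, a). -/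
open MeasureTheory

/-- the plane-wave ansatz `δ⁻A_n(τ) = a e^{i(Ωτ − qn − φ)}`,
`δ⁻B_n = b` (with `a > 0`, `b ≤ 2κa`) solves the strain form of the generalized
DpS equation iff the nonlinear dispersion relation
`Ω = (2/(κω³)) sin²(q/2) h_α(b,a)` holds. -/
theorem stmt11 (α κ ρ ω : ℝ) (hα : 1 < α) (hκ : 0 < κ) (hρ : 0 < ρ)
    (hω : ω = Real.sqrt (κ + κ / ρ))
    (h : ℝ → ℝ → ℝ)
    (hh : ∀ b r, h b r = (1 / (2 * Real.pi * r)) *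
      ∫ t in (0:ℝ)..(2 * Real.pi),
        Real.cos t * (max (-b + 2 * κ * r * Real.cos t) 0) ^ α)
    (a b q φ Ω : ℝ) (ha : 0 < a) (hb : b ≤ 2 * κ * a)
    (x : ℤ → ℝ → ℂ)
    (hx : ∀ (n : ℤ) (τ : ℝ),
      x n τ = (a : ℂ) * Complex.exp (Complex.I * ((Ω * τ - q * n - φ : ℝ) : ℂ))) :
    (∀ (n : ℤ) (τ : ℝ),
      ((2 * κ * ω^3 : ℝ) : ℂ) * Complex.I * deriv (x n) τ =
        (((h b (‖x (n+1) τ‖) : ℝ) : ℂ) * x (n+1) τ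
          - ((h b (‖x n τ‖) : ℝ) : ℂ) * x n τ)
        - (((h b (‖x n τ‖) : ℝ) : ℂ) * x n τ
          - ((h b (‖x (n-1) τ‖) : ℝ) : ℂ) * x (n-1) τ))
    ↔ Ω = (2 / (κ * ω^3)) * (Real.sin (q / 2))^2 * h b a := by
  have hω0 : 0 < ω := by
    rw [hω]; apply Real.sqrt_pos.mpr; positivity
  have hcw : κ * ω ^ 3 ≠ 0 := by positivity
  have hane : (a : ℂ) ≠ 0 := by exact_mod_cast ha.ne'
  have hxabs : ∀ (n : ℤ) (τ : ℝ), ‖x n τ‖ = a := by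
    intro n τ
    rw [hx, norm_mul, Complex.norm_exp]
    simp [Complex.mul_re, abs_of_pos ha]
  have hderiv : ∀ (n : ℤ) (τ : ℝ), deriv (x n) τ = Complex.I * Ω * x n τ := by
    intro n τ
    have h1 : x n = fun s : ℝ =>
        (a : ℂ) * Complex.exp (Complex.I * Ω * s + Complex.I * (-(q * n) - φ)) := by
      funext s; rw [hx]; push_cast; ring_nf
    have h3 : HasDerivAt (fun z : ℂ => Complex.I * Ω * z + Complex.I * (-(q * n) - φ))
        (Complex.I * Ω) (τ : ℂ) := by
      simpa using ((hasDerivAt_id (τ:ℂ)).const_mul (Complex.I * (Ω:ℂ))).add_const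
        (Complex.I * (-(q * n) - φ))
    have h4 := ((h3.cexp).const_mul (a:ℂ)).comp_ofReal
    rw [h1, h4.deriv]
    simp only
    ring
  have hcosid : Complex.exp (Complex.I * q) + Complex.exp (-(Complex.I * q)) - 2
      = ((2 * Real.cos q - 2 : ℝ) : ℂ) := by
    have h2c := Complex.two_cos (q : ℂ)
    push_cast [Complex.ofReal_cos]
    rw [show Complex.I * (q:ℂ) = (q:ℂ) * Complex.I by ring,
      show -((q:ℂ) * Complex.I) = (-(q:ℂ)) * Complex.I by ring]
    linear_combination -h2c
  -- main per-(n,τ) equivalence, with a real scalar RHS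
  have main : ∀ (n : ℤ) (τ : ℝ),
      (((2 * κ * ω^3 : ℝ) : ℂ) * Complex.I * deriv (x n) τ =
        (((h b (‖x (n+1) τ‖) : ℝ) : ℂ) * x (n+1) τ
          - ((h b (‖x n τ‖) : ℝ) : ℂ) * x n τ)
        - (((h b (‖x n τ‖) : ℝ) : ℂ) * x n τ
          - ((h b (‖x (n-1) τ‖) : ℝ) : ℂ) * x (n-1) τ))
      ↔ -(2 * κ * ω^3 * Ω) = h b a * (2 * Real.cos q - 2) := by
    intro n τ
    rw [hderiv n τ]
    simp only [hxabs]
    rw [hx (n+1) τ, hx (n-1) τ, hx n τ]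
    push_cast
    rw [show Complex.I * ((Ω:ℂ) * τ - q * (n + 1) - φ)
        = Complex.I * ((Ω:ℂ) * τ - q * n - φ) + (-(Complex.I * q)) by ring,
      show Complex.I * ((Ω:ℂ) * τ - q * (n - 1) - φ)
        = Complex.I * ((Ω:ℂ) * τ - q * n - φ) + (Complex.I * q) by ring,
      Complex.exp_add, Complex.exp_add]
    set E := Complex.exp (Complex.I * ((Ω:ℂ) * τ - q * n - φ)) with hE
    have hEne : E ≠ 0 := Complex.exp_ne_zero _
    constructor
    · intro H
      have H' : (-(2 * (κ:ℂ) * ω^3 * Ω)) * ((a:ℂ) * E)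
          = ((h b a : ℝ) : ℂ) * (Complex.exp (Complex.I * q) + Complex.exp (-(Complex.I * q)) - 2)
            * ((a:ℂ) * E) := by
        linear_combination H - 2*(κ:ℂ)*(ω:ℂ)^3*(Ω:ℂ)*(a:ℂ)*E*Complex.I_sq
      have H'' := mul_right_cancel₀ (mul_ne_zero hane hEne) H'
      rw [hcosid] at H''
      exact_mod_cast H''
    · intro H
      have C : (-(2 * (κ:ℂ) * ω^3 * Ω))
          = ((h b a : ℝ) : ℂ) * (Complex.exp (Complex.I * q) + Complex.exp (-(Complex.I * q)) - 2) := by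
        rw [hcosid]
        exact_mod_cast H
      linear_combination ((a:ℂ) * E) * C + 2*(κ:ℂ)*(ω:ℂ)^3*(Ω:ℂ)*(a:ℂ)*E*Complex.I_sq
  have hcos2 : Real.cos q = 1 - 2 * Real.sin (q/2)^2 := by
    have h1 := Real.cos_two_mul (q/2)
    have h2 := Real.sin_sq_add_cos_sq (q/2)
    rw [show 2*(q/2) = q by ring] at h1
    linarith
  constructor
  · intro H
    have H1 := (main 0 0).mp (H 0 0)
    field_simp
    linear_combination (-1/2)*H1 - h b a * hcos2
  · intro H n τ
    apply (main n τ).mpr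
    field_simp at H
    linear_combination (-2)*H - 2*(h b a)*hcos2
end

section
/- Let α > 1 and G(u)_n = (u_{n−1} − u_n)_+^α − (u_n − u_{n+1})_+^α on ℓ_p. Then G is Fréchet differentiable and there exists C > 0 such that ‖DG(u)‖_{L(ℓ_p)} ≤ C‖u‖_p^{α−1} for all u ∈ ℓ_p (here ‖·‖_{L(ℓ_p)} is the operator norm); consequently G is Lipschitz on balls: ‖G(u) − G(w)‖_p ≤ C' max(‖u‖_p, ‖w‖_p)^{α−1} ‖u − w‖_p. -/
open scoped ENNReal
open scoped NNReal

namespace Stmt14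

noncomputable def phi (α : ℝ) (x : ℝ) : ℝ := (max x 0) ^ α
noncomputable def phi' (α : ℝ) (x : ℝ) : ℝ := α * (max x 0) ^ (α - 1)

lemma phi_hasDerivAt (α : ℝ) (hα : 1 < α) (x : ℝ) : HasDerivAt (phi α) (phi' α x) x := by
  rcases lt_trichotomy x 0 with hx | rfl | hx
  · have hev : phi α =ᶠ[nhds x] fun _ => (0:ℝ) := by
      filter_upwards [eventually_lt_nhds hx] with y hy
      simp [phi, max_eq_right hy.le, Real.zero_rpow (by positivity : α ≠ 0)]
    have : HasDerivAt (fun _ : ℝ => (0:ℝ)) 0 x := hasDerivAt_const x 0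
    have h2 := this.congr_of_eventuallyEq hev
    simpa [phi', max_eq_right hx.le, Real.zero_rpow (by nlinarith : α - 1 ≠ 0)] using h2
  · -- x = 0
    have h0 : phi' α 0 = 0 := by
      simp [phi', Real.zero_rpow (by nlinarith : α - 1 ≠ 0)]
    rw [h0]
    rw [hasDerivAt_iff_isLittleO]
    simp only [phi, max_self, sub_zero, smul_zero, sub_zero,
      Real.zero_rpow (by positivity : α ≠ 0)]
    rw [Asymptotics.isLittleO_iff]
    intro c hc
    have hcont : Filter.Tendsto (fun y : ℝ => |y| ^ (α - 1)) (nhds 0) (nhds 0) := by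
      have : Filter.Tendsto (fun y : ℝ => |y|) (nhds 0) (nhds 0) := by
        simpa using continuous_abs.tendsto (0:ℝ)
      have h2 : Filter.Tendsto (fun t : ℝ => t ^ (α - 1)) (nhds 0) (nhds (0 ^ (α-1))) :=
        (Real.continuousAt_rpow_const 0 (α-1) (Or.inr (by linarith))).tendsto
      rw [Real.zero_rpow (by nlinarith : α - 1 ≠ 0)] at h2
      exact h2.comp this
    filter_upwards [hcont (Metric.ball_mem_nhds 0 hc)] with y hy
    have hy' : |y| ^ (α - 1) ≤ c := by
      have h3 := Metric.mem_ball.mp hy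
      rw [Real.dist_0_eq_abs, abs_of_nonneg (Real.rpow_nonneg (abs_nonneg y) _)] at h3
      linarith
    have h1 : max y 0 ^ α ≤ |y| ^ α := by
      apply Real.rpow_le_rpow (le_max_right y 0) _ (by linarith)
      simp [le_abs_self]
    have h2 : |y| ^ α = |y| ^ (α - 1) * |y| := by
      rw [← Real.rpow_add_one' (abs_nonneg y) (by nlinarith)]
      ring_nf
    calc ‖max y 0 ^ α‖ = max y 0 ^ α := by
          rw [Real.norm_eq_abs, abs_of_nonneg (Real.rpow_nonneg (le_max_right y 0) α)]
      _ ≤ |y| ^ α := h1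
      _ = |y| ^ (α - 1) * |y| := h2
      _ ≤ c * ‖y‖ := by
          rw [Real.norm_eq_abs]
          exact mul_le_mul_of_nonneg_right hy' (abs_nonneg y)
  · have hev : phi α =ᶠ[nhds x] fun y => y ^ α := by
      filter_upwards [eventually_gt_nhds hx] with y hy
      simp [phi, max_eq_left hy.le]
    have h1 : HasDerivAt (fun y : ℝ => y ^ α) (α * x ^ (α - 1)) x :=
      Real.hasDerivAt_rpow_const (Or.inl hx.ne')
    have h2 := h1.congr_of_eventuallyEq hev
    simpa [phi', max_eq_left hx.le] using h2

lemma rpow_holder {β θ M : ℝ} (hβ : 0 < β) (hθ : θ = min β 1) (hM : 0 ≤ M) {a b : ℝ}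
    (ha : a ∈ Set.Icc 0 M) (hb : b ∈ Set.Icc 0 M) :
    |a ^ β - b ^ β| ≤ (β + 1) * M ^ (β - θ) * |a - b| ^ θ := by
  have key : ∀ a b : ℝ, a ∈ Set.Icc 0 M → b ∈ Set.Icc 0 M → b ≤ a →
      a ^ β - b ^ β ≤ (β + 1) * M ^ (β - θ) * |a - b| ^ θ := by
    intro a b ha hb hba
    rcases le_or_gt β 1 with h1 | h1
    · have hθβ : θ = β := by rw [hθ, min_eq_left h1]
      rw [hθβ]
      simp only [sub_self, Real.rpow_zero, mul_one]
      have hsub : a ^ β ≤ b ^ β + (a - b) ^ β := by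
        have hkey := NNReal.rpow_add_le_add_rpow (a - b).toNNReal b.toNNReal hβ.le h1
        have hkey' : ((((a-b).toNNReal + b.toNNReal) ^ β : ℝ≥0) : ℝ)
            ≤ (((a-b).toNNReal ^ β + b.toNNReal ^ β : ℝ≥0) : ℝ) := NNReal.coe_le_coe.mpr hkey
        have hab : ((a-b).toNNReal : ℝ) = a - b := Real.coe_toNNReal _ (by linarith)
        have hbb : (b.toNNReal : ℝ) = b := Real.coe_toNNReal _ hb.1
        rw [NNReal.coe_rpow, NNReal.coe_add, NNReal.coe_add, NNReal.coe_rpow, NNReal.coe_rpow,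
          hab, hbb] at hkey'
        have hab2 : a - b + b = a := by ring
        rw [hab2] at hkey'
        linarith
      calc a ^ β - b ^ β ≤ (a - b) ^ β := by linarith
        _ = |a - b| ^ β := by rw [abs_of_nonneg (by linarith)]
        _ ≤ (β + 1) * |a - b| ^ β := by
            nlinarith [Real.rpow_nonneg (abs_nonneg (a-b)) β]
    · have hθ1 : θ = 1 := by rw [hθ, min_eq_right h1.le]
      rw [hθ1]
      have hderiv : ∀ t ∈ Set.Icc (0:ℝ) M,
          HasDerivWithinAt (fun s : ℝ => s ^ β) (β * t ^ (β - 1)) (Set.Icc 0 M) t := fun t _ =>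
        (Real.hasDerivAt_rpow_const (Or.inr h1.le)).hasDerivWithinAt
      have hbound : ∀ t ∈ Set.Icc (0:ℝ) M, ‖β * t ^ (β - 1)‖ ≤ β * M ^ (β - 1) := by
        intro t ht
        rw [Real.norm_eq_abs, abs_of_nonneg (mul_nonneg hβ.le (Real.rpow_nonneg ht.1 _))]
        exact mul_le_mul_of_nonneg_left (Real.rpow_le_rpow ht.1 ht.2 (by linarith)) hβ.le
      have hmvt := (convex_Icc (0:ℝ) M).norm_image_sub_le_of_norm_hasDerivWithin_le
        hderiv hbound hb ha
      rw [Real.norm_eq_abs, Real.norm_eq_abs] at hmvt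
      calc a ^ β - b ^ β ≤ |a ^ β - b ^ β| := le_abs_self _
        _ ≤ β * M ^ (β - 1) * |a - b| := hmvt
        _ ≤ (β + 1) * M ^ (β - 1) * |a - b| ^ (1:ℝ) := by
            rw [Real.rpow_one]
            have h0 : (0:ℝ) ≤ M ^ (β - 1) := Real.rpow_nonneg hM _
            nlinarith [abs_nonneg (a - b)]
  rcases le_total b a with hba | hab
  · rw [abs_of_nonneg (by nlinarith [Real.rpow_le_rpow hb.1 hba hβ.le] : (0:ℝ) ≤ a ^ β - b ^ β)]
    exact key a b ha hb hba
  · rw [abs_of_nonpos (by nlinarith [Real.rpow_le_rpow ha.1 hab hβ.le] : a ^ β - b ^ β ≤ 0),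
      neg_sub, abs_sub_comm]
    exact key b a hb ha hab


lemma abs_mem_uIcc_le {x y t : ℝ} (ht : t ∈ Set.uIcc x y) (M : ℝ) (hx : |x| ≤ M) (hy : |y| ≤ M) :
    |t| ≤ M := by
  rw [Set.uIcc_eq_union] at ht
  rcases ht with ht | ht
  · rcases abs_le.mp hx, abs_le.mp hy with ⟨⟨hx1, hx2⟩, ⟨hy1, hy2⟩⟩
    exact abs_le.mpr ⟨by rcases ht with ⟨h1, _⟩; linarith, by rcases ht with ⟨_, h2⟩; linarith⟩
  · rcases abs_le.mp hx, abs_le.mp hy with ⟨⟨hx1, hx2⟩, ⟨hy1, hy2⟩⟩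
    exact abs_le.mpr ⟨by rcases ht with ⟨h1, _⟩; linarith, by rcases ht with ⟨_, h2⟩; linarith⟩

lemma phi'_diff_bound (α : ℝ) (hα : 1 < α) {θ M : ℝ} (hθ : θ = min (α - 1) 1) (hM : 0 ≤ M)
    {x y : ℝ} (hx : |x| ≤ M) (hy : |y| ≤ M) :
    |phi' α x - phi' α y| ≤ α * ((α - 1) + 1) * M ^ (α - 1 - θ) * |x - y| ^ θ := by
  have hβ : 0 < α - 1 := by linarith
  have hmx : max x 0 ∈ Set.Icc (0:ℝ) M := ⟨le_max_right _ _,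
    max_le ((le_abs_self x).trans hx) hM⟩
  have hmy : max y 0 ∈ Set.Icc (0:ℝ) M := ⟨le_max_right _ _,
    max_le ((le_abs_self y).trans hy) hM⟩
  have h1 := rpow_holder hβ hθ hM hmx hmy
  have h2 : |max x 0 - max y 0| ≤ |x - y| := abs_max_sub_max_le_abs x y 0
  have h3 : |max x 0 - max y 0| ^ θ ≤ |x - y| ^ θ :=
    Real.rpow_le_rpow (abs_nonneg _) h2 (by rw [hθ]; exact le_min (by linarith) (by norm_num))
  have h4 : |phi' α x - phi' α y| = α * |max x 0 ^ (α-1) - max y 0 ^ (α-1)| := by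
    rw [phi', phi', ← mul_sub, abs_mul, abs_of_nonneg (by linarith : (0:ℝ) ≤ α)]
  rw [h4]
  calc α * |max x 0 ^ (α-1) - max y 0 ^ (α-1)|
      ≤ α * (((α-1) + 1) * M ^ (α - 1 - θ) * |max x 0 - max y 0| ^ θ) :=
        mul_le_mul_of_nonneg_left h1 (by linarith)
    _ ≤ α * (((α-1) + 1) * M ^ (α - 1 - θ) * |x - y| ^ θ) := by
        have hMθ : (0:ℝ) ≤ M ^ (α - 1 - θ) := Real.rpow_nonneg hM _
        have := mul_le_mul_of_nonneg_left h3 (mul_nonneg (by linarith : (0:ℝ) ≤ (α-1)+1) hMθ)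
        nlinarith [this, (by linarith : (0:ℝ) ≤ α)]
    _ = α * ((α - 1) + 1) * M ^ (α - 1 - θ) * |x - y| ^ θ := by ring

lemma remainder_bound (α : ℝ) (hα : 1 < α) {θ M : ℝ} (hθ : θ = min (α - 1) 1) (hM : 0 ≤ M)
    {x h : ℝ} (hx : |x| ≤ M) (hh : |h| ≤ M) :
    |phi α (x + h) - phi α x - phi' α x * h|
      ≤ α * ((α - 1) + 1) * (2 * M) ^ (α - 1 - θ) * |h| ^ θ * |h| := by
  set C : ℝ := α * ((α - 1) + 1) * (2 * M) ^ (α - 1 - θ) * |h| ^ θ with hC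
  have hg : ∀ t ∈ Set.uIcc x (x + h),
      HasDerivWithinAt (fun s => phi α s - phi' α x * s) (phi' α t - phi' α x)
        (Set.uIcc x (x + h)) t := by
    intro t _
    have hd := ((phi_hasDerivAt α hα t).sub
      ((hasDerivAt_id t).const_mul (phi' α x))).hasDerivWithinAt (s := Set.uIcc x (x + h))
    simp only [mul_one] at hd
    exact hd
  have hbound : ∀ t ∈ Set.uIcc x (x + h), ‖phi' α t - phi' α x‖ ≤ C := by
    intro t htm
    have hxt : |x + h| ≤ 2 * M := by
      calc |x + h| ≤ |x| + |h| := abs_add_le _ _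
        _ ≤ 2 * M := by linarith
    have ht2 : |t| ≤ 2 * M := abs_mem_uIcc_le htm (2*M) (by linarith) hxt
    have hx2 : |x| ≤ 2 * M := by linarith
    have hd := phi'_diff_bound α hα hθ (by linarith : (0:ℝ) ≤ 2*M) ht2 hx2
    have htx : |t - x| ≤ |h| := by
      have := Set.abs_sub_left_of_mem_uIcc htm
      simpa using this
    have htxθ : |t - x| ^ θ ≤ |h| ^ θ :=
      Real.rpow_le_rpow (abs_nonneg _) htx (by rw [hθ]; exact le_min (by linarith) (by norm_num))
    rw [Real.norm_eq_abs]
    calc |phi' α t - phi' α x| ≤ α * ((α-1)+1) * (2*M) ^ (α-1-θ) * |t - x| ^ θ := hd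
      _ ≤ C := by
          rw [hC]
          have : (0:ℝ) ≤ α * ((α-1)+1) * (2*M) ^ (α-1-θ) :=
            mul_nonneg (mul_nonneg (by linarith) (by linarith))
              (Real.rpow_nonneg (by linarith) _)
          exact mul_le_mul_of_nonneg_left htxθ this
  have hmvt := (convex_uIcc x (x+h)).norm_image_sub_le_of_norm_hasDerivWithin_le
    hg hbound (Set.left_mem_uIcc) (Set.right_mem_uIcc)
  rw [Real.norm_eq_abs, Real.norm_eq_abs] at hmvt
  have heq : phi α (x + h) - phi' α x * (x + h) - (phi α x - phi' α x * x)
      = phi α (x + h) - phi α x - phi' α x * h := by ring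
  rw [heq] at hmvt
  simpa using hmvt

lemma phi_diff_bound (α : ℝ) (hα : 1 < α) {M : ℝ} (hM : 0 ≤ M)
    {x y : ℝ} (hx : |x| ≤ M) (hy : |y| ≤ M) :
    |phi α x - phi α y| ≤ α * M ^ (α - 1) * |x - y| := by
  have hg : ∀ t ∈ Set.uIcc x y,
      HasDerivWithinAt (phi α) (phi' α t) (Set.uIcc x y) t := fun t _ =>
    (phi_hasDerivAt α hα t).hasDerivWithinAt
  have hbound : ∀ t ∈ Set.uIcc x y, ‖phi' α t‖ ≤ α * M ^ (α - 1) := by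
    intro t htm
    have ht : |t| ≤ M := abs_mem_uIcc_le htm M hx hy
    rw [Real.norm_eq_abs, phi',
      abs_of_nonneg (mul_nonneg (by linarith) (Real.rpow_nonneg (le_max_right _ _) _))]
    have : max t 0 ≤ M := max_le ((le_abs_self t).trans ht) hM
    exact mul_le_mul_of_nonneg_left
      (Real.rpow_le_rpow (le_max_right _ _) this (by linarith)) (by linarith)
  have hmvt := (convex_uIcc x y).norm_image_sub_le_of_norm_hasDerivWithin_le
    hg hbound (Set.right_mem_uIcc) (Set.left_mem_uIcc)
  rw [Real.norm_eq_abs, Real.norm_eq_abs] at hmvt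
  exact hmvt

section LpLayer

variable {p : ℝ≥0∞}

lemma memℓp_of_dominated {f g : ℤ → ℝ} (hg : Memℓp g p) (h : ∀ n, ‖f n‖ ≤ ‖g n‖) :
    Memℓp f p := by
  rcases p.trichotomy with rfl | rfl | hp
  · refine memℓp_zero (hg.finite_dsupport.subset ?_)
    intro n hn
    simp only [Set.mem_setOf_eq] at hn ⊢
    intro hgn
    apply hn
    have := h n
    rw [hgn] at this
    simpa using le_antisymm (by simpa using this) (norm_nonneg _) |> norm_eq_zero.mp
  · obtain ⟨C, hC⟩ := hg.bddAbove
    refine memℓp_infty ⟨C, ?_⟩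
    rintro - ⟨n, rfl⟩
    exact (h n).trans (hC ⟨n, rfl⟩)
  · refine memℓp_gen ?_
    refine Summable.of_nonneg_of_le (fun n => Real.rpow_nonneg (norm_nonneg _) _)
      (fun n => Real.rpow_le_rpow (norm_nonneg _) (h n) hp.le) (hg.summable hp)

lemma norm_le_of_dominated [Fact (1 ≤ p)] {f g : lp (fun _ : ℤ => ℝ) p}
    (h : ∀ n, ‖(f : ℤ → ℝ) n‖ ≤ ‖(g : ℤ → ℝ) n‖) : ‖f‖ ≤ ‖g‖ := by
  rcases p.dichotomy with rfl | hp
  · exact lp.norm_le_of_forall_le (norm_nonneg g)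
      (fun n => (h n).trans (lp.norm_apply_le_norm (by norm_num) g n))
  · have hp' : 0 < p.toReal := zero_lt_one.trans_le hp
    refine lp.norm_le_of_forall_sum_le hp' (norm_nonneg g) (fun s => ?_)
    calc ∑ i ∈ s, ‖(f : ℤ → ℝ) i‖ ^ p.toReal
        ≤ ∑ i ∈ s, ‖(g : ℤ → ℝ) i‖ ^ p.toReal :=
          Finset.sum_le_sum (fun i _ => Real.rpow_le_rpow (norm_nonneg _) (h i) hp'.le)
      _ ≤ ‖g‖ ^ p.toReal := lp.sum_rpow_le_norm_rpow hp' g s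

lemma memℓp_shift {f : ℤ → ℝ} (hf : Memℓp f p) (k : ℤ) : Memℓp (fun n => f (n + k)) p := by
  rcases p.trichotomy with rfl | rfl | hp
  · refine memℓp_zero ?_
    have : {n : ℤ | f (n + k) ≠ 0} = (fun n : ℤ => n + k) ⁻¹' {m : ℤ | f m ≠ 0} := rfl
    rw [this]
    exact hf.finite_dsupport.preimage (Set.injOn_of_injective (add_left_injective k))
  · refine memℓp_infty ?_
    have : (Set.range fun n : ℤ => ‖f (n + k)‖) = Set.range fun m : ℤ => ‖f m‖ := by
      rw [show (fun n : ℤ => ‖f (n + k)‖) = (fun m : ℤ => ‖f m‖) ∘ (fun n : ℤ => n + k) from rfl,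
        Set.range_comp,
        show (Set.range fun n : ℤ => n + k) = Set.univ from
          (Equiv.addRight k).surjective.range_eq, Set.image_univ]
    rw [this]
    exact hf.bddAbove
  · refine memℓp_gen ?_
    have : (fun n : ℤ => ‖f (n + k)‖ ^ p.toReal)
        = (fun m : ℤ => ‖f m‖ ^ p.toReal) ∘ (Equiv.addRight k) := rfl
    rw [this, Equiv.summable_iff]
    exact hf.summable hp

variable [Fact (1 ≤ p)]

def shx (k : ℤ) (x : lp (fun _ : ℤ => ℝ) p) : lp (fun _ : ℤ => ℝ) p :=
  ⟨fun n => x (n + k), memℓp_shift (lp.memℓp x) k⟩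

@[simp] lemma shx_apply (k : ℤ) (x : lp (fun _ : ℤ => ℝ) p) (n : ℤ) :
    (shx k x : ℤ → ℝ) n = x (n + k) := rfl

lemma norm_shx_le (k : ℤ) (x : lp (fun _ : ℤ => ℝ) p) : ‖shx k x‖ ≤ ‖x‖ := by
  rcases p.dichotomy with rfl | hp
  · exact lp.norm_le_of_forall_le (norm_nonneg x)
      (fun n => lp.norm_apply_le_norm (by norm_num) x (n + k))
  · have hp' : 0 < p.toReal := zero_lt_one.trans_le hp
    refine lp.norm_le_of_forall_sum_le hp' (norm_nonneg x) (fun s => ?_)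
    have : ∑ i ∈ s, ‖(shx k x : ℤ → ℝ) i‖ ^ p.toReal
        = ∑ j ∈ s.map (Equiv.addRight k).toEmbedding, ‖(x : ℤ → ℝ) j‖ ^ p.toReal := by
      rw [Finset.sum_map]
      rfl
    rw [this]
    exact lp.sum_rpow_le_norm_rpow hp' x _

def absx (x : lp (fun _ : ℤ => ℝ) p) : lp (fun _ : ℤ => ℝ) p :=
  ⟨fun n => |x n|, memℓp_of_dominated (lp.memℓp x) (fun n => by simp [Real.norm_eq_abs])⟩

@[simp] lemma absx_apply (x : lp (fun _ : ℤ => ℝ) p) (n : ℤ) :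
    (absx x : ℤ → ℝ) n = |x n| := rfl

lemma norm_absx_le (x : lp (fun _ : ℤ => ℝ) p) : ‖absx x‖ ≤ ‖x‖ :=
  norm_le_of_dominated (fun n => by simp [Real.norm_eq_abs])

noncomputable def hl (v : lp (fun _ : ℤ => ℝ) p) : lp (fun _ : ℤ => ℝ) p := shx (-1) v - v

lemma hl_apply (v : lp (fun _ : ℤ => ℝ) p) (n : ℤ) :
    (hl v : ℤ → ℝ) n = v (n - 1) - v n := by
  have : n + -1 = n - 1 := by ring
  simp [hl, lp.coeFn_sub, Pi.sub_apply, this]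

lemma norm_hl_le (v : lp (fun _ : ℤ => ℝ) p) : ‖hl v‖ ≤ 2 * ‖v‖ := by
  calc ‖hl v‖ ≤ ‖shx (-1) v‖ + ‖v‖ := norm_sub_le _ _
    _ ≤ ‖v‖ + ‖v‖ := by linarith [norm_shx_le (-1) v]
    _ = 2 * ‖v‖ := by ring

lemma gx_apply (c : ℝ) (z : lp (fun _ : ℤ => ℝ) p) (n : ℤ) :
    ((c • (absx (hl z) + shx 1 (absx (hl z))) : lp (fun _ : ℤ => ℝ) p) : ℤ → ℝ) n
      = c * (|(hl z : ℤ → ℝ) n| + |(hl z : ℤ → ℝ) (n + 1)|) := by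
  simp [lp.coeFn_smul, lp.coeFn_add, Pi.smul_apply, Pi.add_apply]
  show c * |(hl z : ℤ → ℝ) n| + c * |(hl z : ℤ → ℝ) (n + 1)| = _
  ring

lemma gx_norm_apply {c : ℝ} (hc : 0 ≤ c) (z : lp (fun _ : ℤ => ℝ) p) (n : ℤ) :
    ‖((c • (absx (hl z) + shx 1 (absx (hl z))) : lp (fun _ : ℤ => ℝ) p) : ℤ → ℝ) n‖
      = c * (|(hl z : ℤ → ℝ) n| + |(hl z : ℤ → ℝ) (n + 1)|) := by
  rw [gx_apply, Real.norm_eq_abs, abs_of_nonneg]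
  positivity

lemma key_mem {c : ℝ} (hc : 0 ≤ c) (z : lp (fun _ : ℤ => ℝ) p) (E : ℤ → ℝ)
    (h : ∀ n, ‖E n‖ ≤ c * (|(hl z : ℤ → ℝ) n| + |(hl z : ℤ → ℝ) (n + 1)|)) :
    Memℓp E p := by
  refine memℓp_of_dominated
    (lp.memℓp (c • (absx (hl z) + shx 1 (absx (hl z))))) (fun n => ?_)
  rw [gx_norm_apply hc]
  exact h n

lemma key_norm {c : ℝ} (hc : 0 ≤ c) (z : lp (fun _ : ℤ => ℝ) p) (E : lp (fun _ : ℤ => ℝ) p)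
    (h : ∀ n, ‖(E : ℤ → ℝ) n‖ ≤ c * (|(hl z : ℤ → ℝ) n| + |(hl z : ℤ → ℝ) (n + 1)|)) :
    ‖E‖ ≤ c * (4 * ‖z‖) := by
  have h1 : ‖E‖ ≤ ‖(c • (absx (hl z) + shx 1 (absx (hl z))) : lp (fun _ : ℤ => ℝ) p)‖ := by
    refine norm_le_of_dominated (fun n => ?_)
    rw [gx_norm_apply hc]
    exact h n
  have h2 : ‖(c • (absx (hl z) + shx 1 (absx (hl z))) : lp (fun _ : ℤ => ℝ) p)‖
      ≤ c * (4 * ‖z‖) := by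
    calc ‖(c • (absx (hl z) + shx 1 (absx (hl z))) : lp (fun _ : ℤ => ℝ) p)‖
        = |c| * ‖absx (hl z) + shx 1 (absx (hl z))‖ := by
          rw [norm_smul, Real.norm_eq_abs]
      _ ≤ c * (‖absx (hl z)‖ + ‖shx 1 (absx (hl z))‖) := by
          rw [abs_of_nonneg hc]
          exact mul_le_mul_of_nonneg_left (norm_add_le _ _) hc
      _ ≤ c * (4 * ‖z‖) := by
          have ha := norm_absx_le (hl z)
          have hb := (norm_shx_le 1 (absx (hl z))).trans (norm_absx_le (hl z))
          have hz := norm_hl_le z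
          nlinarith [norm_nonneg (hl z), norm_nonneg z]
  exact h1.trans h2

end LpLayer

section Deriv

variable {p : ℝ≥0∞} [Fact (1 ≤ p)]

lemma p_ne_zero : p ≠ 0 := (zero_lt_one.trans_le (Fact.out : 1 ≤ p)).ne'

lemma apply_abs_le (u : lp (fun _ : ℤ => ℝ) p) (n : ℤ) : |(u : ℤ → ℝ) n| ≤ ‖u‖ := by
  have := lp.norm_apply_le_norm (p_ne_zero) u n
  rwa [Real.norm_eq_abs] at this

lemma a_bound (u : lp (fun _ : ℤ => ℝ) p) (n : ℤ) :
    |(u : ℤ → ℝ) (n - 1) - (u : ℤ → ℝ) n| ≤ 2 * ‖u‖ := by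
  calc |(u : ℤ → ℝ) (n - 1) - (u : ℤ → ℝ) n| ≤ |(u : ℤ → ℝ) (n-1)| + |(u : ℤ → ℝ) n| :=
        abs_sub _ _
    _ ≤ 2 * ‖u‖ := by linarith [apply_abs_le u (n-1), apply_abs_le u n]

lemma phi'_abs_le (α : ℝ) (hα : 1 < α) {x M : ℝ} (hx : |x| ≤ M) :
    |phi' α x| ≤ α * M ^ (α - 1) := by
  rw [phi', abs_mul, abs_of_nonneg (by linarith : (0:ℝ) ≤ α),
    abs_of_nonneg (Real.rpow_nonneg (le_max_right _ _) _)]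
  have h1 : max x 0 ≤ M := max_le ((le_abs_self x).trans hx) ((abs_nonneg x).trans hx)
  exact mul_le_mul_of_nonneg_left
    (Real.rpow_le_rpow (le_max_right x 0) h1 (by linarith)) (by linarith)

noncomputable def cseq (α : ℝ) (u : lp (fun _ : ℤ => ℝ) p) : ℤ → ℝ :=
  fun n => phi' α ((u : ℤ → ℝ) (n - 1) - (u : ℤ → ℝ) n)

lemma cseq_bound (α : ℝ) (hα : 1 < α) (u : lp (fun _ : ℤ => ℝ) p) (n : ℤ) :
    |cseq α u n| ≤ α * (2 * ‖u‖) ^ (α - 1) :=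
  phi'_abs_le α hα (a_bound u n)

noncomputable def Dfun (α : ℝ) (u v : lp (fun _ : ℤ => ℝ) p) : ℤ → ℝ := fun n =>
  cseq α u n * (hl v : ℤ → ℝ) n - cseq α u (n + 1) * (hl v : ℤ → ℝ) (n + 1)

lemma Dfun_dom (α : ℝ) (hα : 1 < α) (u v : lp (fun _ : ℤ => ℝ) p) (n : ℤ) :
    ‖Dfun α u v n‖ ≤ (α * (2 * ‖u‖) ^ (α - 1)) *
      (|(hl v : ℤ → ℝ) n| + |(hl v : ℤ → ℝ) (n + 1)|) := by
  have h1 := cseq_bound α hα u n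
  have h2 := cseq_bound α hα u (n + 1)
  rw [Real.norm_eq_abs, Dfun]
  calc |cseq α u n * (hl v : ℤ → ℝ) n - cseq α u (n + 1) * (hl v : ℤ → ℝ) (n + 1)|
      ≤ |cseq α u n * (hl v : ℤ → ℝ) n| + |cseq α u (n + 1) * (hl v : ℤ → ℝ) (n + 1)| :=
        abs_sub _ _
    _ ≤ (α * (2 * ‖u‖) ^ (α - 1)) * (|(hl v : ℤ → ℝ) n| + |(hl v : ℤ → ℝ) (n + 1)|) := by
        rw [abs_mul, abs_mul]
        nlinarith [abs_nonneg ((hl v : ℤ → ℝ) n), abs_nonneg ((hl v : ℤ → ℝ) (n+1)),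
          abs_nonneg (cseq α u n), abs_nonneg (cseq α u (n+1))]

lemma BB_nonneg (α : ℝ) (hα : 1 < α) (u : lp (fun _ : ℤ => ℝ) p) :
    0 ≤ α * (2 * ‖u‖) ^ (α - 1) :=
  mul_nonneg (by linarith) (Real.rpow_nonneg (by positivity) _)

noncomputable def Dlin (α : ℝ) (hα : 1 < α) (u : lp (fun _ : ℤ => ℝ) p) :
    lp (fun _ : ℤ => ℝ) p →ₗ[ℝ] lp (fun _ : ℤ => ℝ) p where
  toFun v := ⟨Dfun α u v, key_mem (BB_nonneg α hα u) v _ (Dfun_dom α hα u v)⟩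
  map_add' v w := by
    apply lp.ext
    funext n
    show Dfun α u (v + w) n = Dfun α u v n + Dfun α u w n
    simp only [Dfun, hl_apply, lp.coeFn_add, Pi.add_apply]
    ring
  map_smul' c v := by
    apply lp.ext
    funext n
    show Dfun α u (c • v) n = c • Dfun α u v n
    simp only [Dfun, hl_apply, lp.coeFn_smul, Pi.smul_apply, smul_eq_mul]
    ring

lemma Dlin_apply (α : ℝ) (hα : 1 < α) (u v : lp (fun _ : ℤ => ℝ) p) (n : ℤ) :
    ((Dlin α hα u v : lp (fun _ : ℤ => ℝ) p) : ℤ → ℝ) n = Dfun α u v n := rfl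

lemma Dlin_bound (α : ℝ) (hα : 1 < α) (u v : lp (fun _ : ℤ => ℝ) p) :
    ‖Dlin α hα u v‖ ≤ (4 * (α * (2 * ‖u‖) ^ (α - 1))) * ‖v‖ := by
  have := key_norm (BB_nonneg α hα u) v (Dlin α hα u v) (fun n => Dfun_dom α hα u v n)
  calc ‖Dlin α hα u v‖ ≤ (α * (2 * ‖u‖) ^ (α - 1)) * (4 * ‖v‖) := this
    _ = (4 * (α * (2 * ‖u‖) ^ (α - 1))) * ‖v‖ := by ring

noncomputable def Dclm (α : ℝ) (hα : 1 < α) (u : lp (fun _ : ℤ => ℝ) p) :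
    lp (fun _ : ℤ => ℝ) p →L[ℝ] lp (fun _ : ℤ => ℝ) p :=
  (Dlin α hα u).mkContinuous (4 * (α * (2 * ‖u‖) ^ (α - 1))) (Dlin_bound α hα u)

lemma Dclm_norm_le (α : ℝ) (hα : 1 < α) (u : lp (fun _ : ℤ => ℝ) p) :
    ‖Dclm α hα u‖ ≤ 4 * (α * (2 * ‖u‖) ^ (α - 1)) :=
  LinearMap.mkContinuous_norm_le _ (by positivity) _

end Deriv

lemma Dclm_apply {p : ℝ≥0∞} [Fact (1 ≤ p)] (α : ℝ) (hα : 1 < α)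
    (u v : lp (fun _ : ℤ => ℝ) p) (n : ℤ) :
    ((Dclm α hα u v : lp (fun _ : ℤ => ℝ) p) : ℤ → ℝ) n = Dfun α u v n := rfl

end Stmt14

open Stmt14 in

/-- the Hertzian map `G` on `ℓ_p` is Fréchet differentiable with
`‖DG(u)‖ ≤ C‖u‖^{α−1}`, and consequently Lipschitz on balls. -/
theorem stmt14 (α : ℝ) (hα : 1 < α) (p : ℝ≥0∞) [Fact (1 ≤ p)]
    (G : lp (fun _ : ℤ => ℝ) p → lp (fun _ : ℤ => ℝ) p)
    (hG : ∀ (u : lp (fun _ : ℤ => ℝ) p) (n : ℤ),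
      (G u : ∀ _ : ℤ, ℝ) n =
        (max ((u : ∀ _ : ℤ, ℝ) (n-1) - (u : ∀ _ : ℤ, ℝ) n) 0) ^ α
          - (max ((u : ∀ _ : ℤ, ℝ) n - (u : ∀ _ : ℤ, ℝ) (n+1)) 0) ^ α) :
    (∃ C : ℝ, 0 < C ∧ ∀ u : lp (fun _ : ℤ => ℝ) p,
      ∃ D : lp (fun _ : ℤ => ℝ) p →L[ℝ] lp (fun _ : ℤ => ℝ) p,
        HasFDerivAt G D u ∧ ‖D‖ ≤ C * ‖u‖ ^ (α - 1)) ∧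
    (∃ C' : ℝ, 0 < C' ∧ ∀ u w : lp (fun _ : ℤ => ℝ) p,
      ‖G u - G w‖ ≤ C' * (max ‖u‖ ‖w‖) ^ (α - 1) * ‖u - w‖) := by
  have hα0 : (0:ℝ) < α := by linarith
  have hβ : (0:ℝ) < α - 1 := by linarith
  have e1 : ∀ m : ℤ, m + 1 - 1 = m := fun m => by ring
  have hGc : ∀ (x : lp (fun _ : ℤ => ℝ) p) (n : ℤ), (G x : ℤ → ℝ) n
      = phi α ((x : ℤ → ℝ) (n-1) - (x : ℤ → ℝ) n)
        - phi α ((x : ℤ → ℝ) (n+1-1) - (x : ℤ → ℝ) (n+1)) := by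
    intro x n
    rw [hG x n, e1 n]
    rfl
  have hCpos : (0:ℝ) < 4 * α * 2 ^ (α - 1) :=
    mul_pos (mul_pos (by norm_num) hα0) (Real.rpow_pos_of_pos two_pos _)
  constructor
  · -- differentiability
    refine ⟨4 * α * 2 ^ (α - 1), hCpos, fun u => ?_⟩
    refine ⟨Dclm α hα u, ?_, ?_⟩
    · -- HasFDerivAt
      set θ : ℝ := min (α - 1) 1 with hθdef
      have hθpos : 0 < θ := lt_min hβ one_pos
      rw [hasFDerivAt_iff_isLittleO_nhds_zero, Asymptotics.isLittleO_iff]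
      intro c hc
      set M : ℝ := max (2 * ‖u‖) 2 with hMdef
      have hM0 : (0:ℝ) ≤ M := le_trans (by norm_num) (le_max_right _ _)
      set K : ℝ := α * ((α - 1) + 1) * (2 * M) ^ (α - 1 - θ) with hKdef
      have hK0 : 0 ≤ K :=
        mul_nonneg (mul_nonneg (by linarith) (by linarith)) (Real.rpow_nonneg (by linarith) _)
      set K₂ : ℝ := 4 * K * 2 ^ θ + 1 with hK₂def
      have hK₂ : 0 < K₂ := by
        have : (0:ℝ) < 2 ^ θ := Real.rpow_pos_of_pos two_pos _
        nlinarith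
      set ε : ℝ := min 1 ((c / K₂) ^ θ⁻¹) with hεdef
      have hε : 0 < ε :=
        lt_min one_pos (Real.rpow_pos_of_pos (div_pos hc hK₂) _)
      filter_upwards [Metric.ball_mem_nhds (0 : lp (fun _ : ℤ => ℝ) p) hε] with v hv
      have hvε : ‖v‖ < ε := by rwa [mem_ball_zero_iff] at hv
      have hv1 : ‖v‖ ≤ 1 := le_of_lt (lt_of_lt_of_le hvε (min_le_left _ _))
      -- the remainder, coordinatewise
      set R : ℤ → ℝ := fun m =>
        phi α (((u + v) : ℤ → ℝ) (m-1) - ((u + v) : ℤ → ℝ) m)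
          - phi α ((u : ℤ → ℝ) (m-1) - (u : ℤ → ℝ) m)
          - phi' α ((u : ℤ → ℝ) (m-1) - (u : ℤ → ℝ) m) * (hl v : ℤ → ℝ) m with hRdef
      have hEcoord : ∀ n : ℤ,
          ((G (u + v) - G u - Dclm α hα u v : lp (fun _ : ℤ => ℝ) p) : ℤ → ℝ) n
            = R n - R (n + 1) := by
        intro n
        simp only [lp.coeFn_sub, Pi.sub_apply]
        rw [hGc (u + v) n, hGc u n, Dclm_apply, e1 n]
        simp only [hRdef, Dfun, cseq, e1, lp.coeFn_add]
        ring
      have hRbound : ∀ m : ℤ, |R m| ≤ K * (2 ^ θ * ‖v‖ ^ θ) * |(hl v : ℤ → ℝ) m| := by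
        intro m
        have harg : ((u + v) : ℤ → ℝ) (m-1) - ((u + v) : ℤ → ℝ) m
            = ((u : ℤ → ℝ) (m-1) - (u : ℤ → ℝ) m) + (hl v : ℤ → ℝ) m := by
          simp only [lp.coeFn_add, Pi.add_apply, hl_apply]
          ring
        have hx : |(u : ℤ → ℝ) (m-1) - (u : ℤ → ℝ) m| ≤ M :=
          (a_bound u m).trans (le_max_left _ _)
        have hhm : |(hl v : ℤ → ℝ) m| ≤ 2 * ‖v‖ := by
          rw [hl_apply]
          exact a_bound v m
        have hhM : |(hl v : ℤ → ℝ) m| ≤ M := by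
          have : 2 * ‖v‖ ≤ 2 := by linarith
          exact hhm.trans (this.trans (le_max_right _ _))
        have hrem := remainder_bound α hα hθdef hM0 hx hhM
        rw [hRdef]
        simp only []
        rw [harg]
        refine hrem.trans ?_
        have hpow : |(hl v : ℤ → ℝ) m| ^ θ ≤ 2 ^ θ * ‖v‖ ^ θ := by
          have h2 : |(hl v : ℤ → ℝ) m| ^ θ ≤ (2 * ‖v‖) ^ θ :=
            Real.rpow_le_rpow (abs_nonneg _) hhm hθpos.le
          rwa [Real.mul_rpow (by norm_num) (norm_nonneg v)] at h2
        have := mul_le_mul_of_nonneg_right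
          (mul_le_mul_of_nonneg_left hpow hK0) (abs_nonneg ((hl v : ℤ → ℝ) m))
        calc α * ((α - 1) + 1) * (2 * M) ^ (α - 1 - θ) * |(hl v : ℤ → ℝ) m| ^ θ
              * |(hl v : ℤ → ℝ) m|
            = K * |(hl v : ℤ → ℝ) m| ^ θ * |(hl v : ℤ → ℝ) m| := by rw [hKdef]
          _ ≤ K * (2 ^ θ * ‖v‖ ^ θ) * |(hl v : ℤ → ℝ) m| := this
      have hEdom : ∀ n : ℤ,
          ‖((G (u + v) - G u - Dclm α hα u v : lp (fun _ : ℤ => ℝ) p) : ℤ → ℝ) n‖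
            ≤ (K * (2 ^ θ * ‖v‖ ^ θ)) * (|(hl v : ℤ → ℝ) n| + |(hl v : ℤ → ℝ) (n + 1)|) := by
        intro n
        rw [Real.norm_eq_abs, hEcoord n]
        calc |R n - R (n + 1)| ≤ |R n| + |R (n + 1)| := abs_sub _ _
          _ ≤ (K * (2 ^ θ * ‖v‖ ^ θ)) * (|(hl v : ℤ → ℝ) n| + |(hl v : ℤ → ℝ) (n + 1)|) := by
              have h1 := hRbound n
              have h2 := hRbound (n + 1)
              nlinarith [mul_nonneg hK0 (mul_nonneg (Real.rpow_nonneg (by norm_num : (0:ℝ) ≤ 2) θ)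
                (Real.rpow_nonneg (norm_nonneg v) θ))]
      have hcK : 0 ≤ K * (2 ^ θ * ‖v‖ ^ θ) :=
        mul_nonneg hK0 (mul_nonneg (Real.rpow_nonneg (by norm_num) _)
          (Real.rpow_nonneg (norm_nonneg v) _))
      have hEnorm := key_norm hcK v _ hEdom
      have hvθ : ‖v‖ ^ θ ≤ c / K₂ := by
        have h1 : ‖v‖ ^ θ ≤ ε ^ θ := Real.rpow_le_rpow (norm_nonneg v) hvε.le hθpos.le
        have h2 : ε ^ θ ≤ ((c / K₂) ^ θ⁻¹) ^ θ :=
          Real.rpow_le_rpow (le_of_lt hε) (min_le_right _ _) hθpos.le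
        rw [Real.rpow_inv_rpow (div_nonneg hc.le hK₂.le) hθpos.ne'] at h2
        exact h1.trans h2
      calc ‖G (u + v) - G u - Dclm α hα u v‖
          ≤ (K * (2 ^ θ * ‖v‖ ^ θ)) * (4 * ‖v‖) := hEnorm
        _ = (4 * K * 2 ^ θ) * (‖v‖ ^ θ * ‖v‖) := by ring
        _ ≤ K₂ * ((c / K₂) * ‖v‖) := by
            have h0 : 0 ≤ ‖v‖ ^ θ * ‖v‖ :=
              mul_nonneg (Real.rpow_nonneg (norm_nonneg v) _) (norm_nonneg v)
            have h1 : (4 * K * 2 ^ θ) * (‖v‖ ^ θ * ‖v‖) ≤ K₂ * (‖v‖ ^ θ * ‖v‖) := by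
              have : 4 * K * 2 ^ θ ≤ K₂ := by rw [hK₂def]; linarith
              exact mul_le_mul_of_nonneg_right this h0
            refine h1.trans ?_
            have h2 : ‖v‖ ^ θ * ‖v‖ ≤ (c / K₂) * ‖v‖ :=
              mul_le_mul_of_nonneg_right hvθ (norm_nonneg v)
            exact mul_le_mul_of_nonneg_left h2 hK₂.le
        _ = c * ‖v‖ := by field_simp
    · -- norm bound
      have h1 := Dclm_norm_le α hα u
      have h2 : (2 * ‖u‖) ^ (α - 1) = 2 ^ (α - 1) * ‖u‖ ^ (α - 1) :=
        Real.mul_rpow (by norm_num) (norm_nonneg u)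
      calc ‖Dclm α hα u‖ ≤ 4 * (α * (2 * ‖u‖) ^ (α - 1)) := h1
        _ = 4 * α * 2 ^ (α - 1) * ‖u‖ ^ (α - 1) := by rw [h2]; ring
  · -- Lipschitz on balls
    refine ⟨4 * α * 2 ^ (α - 1), hCpos, fun u w => ?_⟩
    set m : ℝ := max ‖u‖ ‖w‖ with hmdef
    have hm0 : (0:ℝ) ≤ m := le_trans (norm_nonneg u) (le_max_left _ _)
    have hdom : ∀ n : ℤ, ‖((G u - G w : lp (fun _ : ℤ => ℝ) p) : ℤ → ℝ) n‖
        ≤ (α * (2 * m) ^ (α - 1)) *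
          (|(hl (u - w) : ℤ → ℝ) n| + |(hl (u - w) : ℤ → ℝ) (n + 1)|) := by
      intro n
      have key : ∀ q : ℤ, |phi α ((u : ℤ → ℝ) (q-1) - (u : ℤ → ℝ) q)
          - phi α ((w : ℤ → ℝ) (q-1) - (w : ℤ → ℝ) q)|
          ≤ α * (2 * m) ^ (α - 1) * |(hl (u - w) : ℤ → ℝ) q| := by
        intro q
        have hxu : |(u : ℤ → ℝ) (q-1) - (u : ℤ → ℝ) q| ≤ 2 * m := by
          have := a_bound u q
          have : 2 * ‖u‖ ≤ 2 * m := by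
            have := le_max_left ‖u‖ ‖w‖
            linarith
          linarith [a_bound u q]
        have hxw : |(w : ℤ → ℝ) (q-1) - (w : ℤ → ℝ) q| ≤ 2 * m := by
          have : 2 * ‖w‖ ≤ 2 * m := by
            have := le_max_right ‖u‖ ‖w‖
            linarith
          linarith [a_bound w q]
        have hd := phi_diff_bound α hα (by linarith : (0:ℝ) ≤ 2*m) hxu hxw
        have harg : ((u : ℤ → ℝ) (q-1) - (u : ℤ → ℝ) q) - ((w : ℤ → ℝ) (q-1) - (w : ℤ → ℝ) q)
            = (hl (u - w) : ℤ → ℝ) q := by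
          rw [hl_apply]
          simp only [lp.coeFn_sub, Pi.sub_apply]
          ring
        rwa [harg] at hd
      have hcoord : ((G u - G w : lp (fun _ : ℤ => ℝ) p) : ℤ → ℝ) n
          = (phi α ((u : ℤ → ℝ) (n-1) - (u : ℤ → ℝ) n)
              - phi α ((w : ℤ → ℝ) (n-1) - (w : ℤ → ℝ) n))
            - (phi α ((u : ℤ → ℝ) (n+1-1) - (u : ℤ → ℝ) (n+1))
              - phi α ((w : ℤ → ℝ) (n+1-1) - (w : ℤ → ℝ) (n+1))) := by
        simp only [lp.coeFn_sub, Pi.sub_apply]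
        rw [hGc u n, hGc w n]
        ring
      rw [Real.norm_eq_abs, hcoord]
      have h1 := key n
      have h2 := key (n + 1)
      rw [e1 n] at *
      calc |(phi α ((u : ℤ → ℝ) (n-1) - (u : ℤ → ℝ) n)
              - phi α ((w : ℤ → ℝ) (n-1) - (w : ℤ → ℝ) n))
            - (phi α ((u : ℤ → ℝ) n - (u : ℤ → ℝ) (n+1))
              - phi α ((w : ℤ → ℝ) n - (w : ℤ → ℝ) (n+1)))|
          ≤ |phi α ((u : ℤ → ℝ) (n-1) - (u : ℤ → ℝ) n)
              - phi α ((w : ℤ → ℝ) (n-1) - (w : ℤ → ℝ) n)|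
            + |phi α ((u : ℤ → ℝ) n - (u : ℤ → ℝ) (n+1))
              - phi α ((w : ℤ → ℝ) n - (w : ℤ → ℝ) (n+1))| := abs_sub _ _
        _ ≤ (α * (2 * m) ^ (α - 1)) *
            (|(hl (u - w) : ℤ → ℝ) n| + |(hl (u - w) : ℤ → ℝ) (n + 1)|) := by
            have h1' := key n
            have h2' := key (n + 1)
            rw [show (n+1:ℤ)-1 = n from by ring] at h2'
            linarith
    have hc0 : 0 ≤ α * (2 * m) ^ (α - 1) :=
      mul_nonneg (by linarith) (Real.rpow_nonneg (by linarith) _)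
    have hfin := key_norm hc0 (u - w) _ hdom
    have h2 : (2 * m) ^ (α - 1) = 2 ^ (α - 1) * m ^ (α - 1) :=
      Real.mul_rpow (by norm_num) hm0
    calc ‖G u - G w‖ ≤ (α * (2 * m) ^ (α - 1)) * (4 * ‖u - w‖) := hfin
      _ = 4 * α * 2 ^ (α - 1) * m ^ (α - 1) * ‖u - w‖ := by rw [h2]; ring
end

section
/- Gronwall step for the resonator component: let T, ε, σ, M > 0 with σ ≤ C_r ε^{2(α−1)}, α > 1, and let R, F : [0, t_ε] → ℓ_p be continuous with t_ε ≤ T ε^{1−α}, ‖F(s)‖_p ≤ K(2Mε)^α for all s, and R(t) = Ṙ(0)t + R(0) + χσ∫₀^t (t−s)F(s) ds with 0 < χ ≤ 1. If ‖R(0)‖_p ≤ Cε^α and ‖Ṙ(0)‖_p ≤ Cε^{2α−1}, then ‖R(t)‖_p ≤ C'ε^α for all t ∈ [0, t_ε], where C' depends only on C, C_r, T, K, M, α. -/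
open MeasureTheory

/-- Gronwall step for the resonator component: under the smallness
assumption `σ ≤ C_r ε^{2(α−1)}`, `tε ≤ T ε^{1−α}`, an `O(ε^α)` force bound and
`O(ε^α)`, `O(ε^{2α−1})` initial data, the double integral representation of `R`
yields `‖R(t)‖ ≤ C' ε^α` on `[0, tε]`, with `C'` depending only on
`C, C_r, T, K, M, α`. -/
theorem stmt15 (C Cr T K M α : ℝ)
    (hC : 0 < C) (hCr : 0 < Cr) (hT : 0 < T) (hK : 0 < K) (hM : 0 < M)
    (hα : 1 < α) :
    ∃ C' : ℝ, 0 < C' ∧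
      ∀ (E : Type) [NormedAddCommGroup E] [NormedSpace ℝ E] [CompleteSpace E],
      ∀ (ε σ χ tε : ℝ) (R F : ℝ → E) (R0 R0' : E),
        0 < ε → 0 < σ → σ ≤ Cr * ε ^ (2 * (α - 1)) →
        0 < χ → χ ≤ 1 →
        0 < tε → tε ≤ T * ε ^ (1 - α) →
        ContinuousOn F (Set.Icc 0 tε) →
        (∀ s ∈ Set.Icc (0:ℝ) tε, ‖F s‖ ≤ K * (2 * M * ε) ^ α) →
        (∀ t ∈ Set.Icc (0:ℝ) tε,
          R t = t • R0' + R0 + (χ * σ) • ∫ s in (0:ℝ)..t, (t - s) • F s) →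
        ‖R0‖ ≤ C * ε ^ α → ‖R0'‖ ≤ C * ε ^ (2 * α - 1) →
        ∀ t ∈ Set.Icc (0:ℝ) tε, ‖R t‖ ≤ C' * ε ^ α := by
  refine ⟨C * T + C + Cr * T ^ 2 * K * (2 * M) ^ α, by positivity, ?_⟩
  intro E _ _ _ ε σ χ tε R F R0 R0' hε hσ hσle hχ hχ1 htε htεle hFc hFb hR hR0 hR0'
  intro t ht
  obtain ⟨ht0, httε⟩ := ht
  have hεα : (0:ℝ) < ε ^ α := Real.rpow_pos_of_pos hε α
  have htT : t ≤ T * ε ^ (1 - α) := le_trans httε htεle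
  -- bound the integral
  have hFbound : ∀ s ∈ Set.uIoc (0:ℝ) t, ‖(t - s) • F s‖ ≤ t * (K * (2 * M * ε) ^ α) := by
    intro s hs
    rw [Set.uIoc_of_le ht0] at hs
    have hF := hFb s ⟨hs.1.le, hs.2.trans httε⟩
    rw [norm_smul, Real.norm_eq_abs, abs_of_nonneg (by linarith [hs.2] : (0:ℝ) ≤ t - s)]
    have h1 : t - s ≤ t := by linarith [hs.1]
    exact mul_le_mul h1 hF (norm_nonneg _) ht0
  have hint : ‖∫ s in (0:ℝ)..t, (t - s) • F s‖ ≤ t * (K * (2 * M * ε) ^ α) * |t - 0| :=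
    intervalIntegral.norm_integral_le_of_norm_le_const hFbound
  rw [sub_zero, abs_of_nonneg ht0] at hint
  -- exponent identities
  have key1 : ε ^ (1 - α) * ε ^ (2 * α - 1) = ε ^ α := by
    rw [← Real.rpow_add hε]; ring_nf
  have key2 : ε ^ (2 * (α - 1)) * ε ^ (1 - α) * ε ^ (1 - α) = 1 := by
    rw [← Real.rpow_add hε, ← Real.rpow_add hε,
      show 2 * (α - 1) + (1 - α) + (1 - α) = 0 by ring, Real.rpow_zero]
  have keyM : (2 * M * ε) ^ α = (2 * M) ^ α * ε ^ α := by
    rw [Real.mul_rpow (by positivity) hε.le]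
  -- term bounds
  have hpow1 : (0:ℝ) ≤ ε ^ (1 - α) := (Real.rpow_pos_of_pos hε _).le
  have t1 : t * ‖R0'‖ ≤ C * T * ε ^ α := by
    calc t * ‖R0'‖ ≤ (T * ε ^ (1 - α)) * (C * ε ^ (2 * α - 1)) := by
          apply mul_le_mul htT hR0' (norm_nonneg _) (by positivity)
      _ = C * T * (ε ^ (1 - α) * ε ^ (2 * α - 1)) := by ring
      _ = C * T * ε ^ α := by rw [key1]
  have t3 : χ * σ * (t * (K * (2 * M * ε) ^ α) * t)
      ≤ Cr * T ^ 2 * K * (2 * M) ^ α * ε ^ α := by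
    have hσt : σ * t * t ≤ Cr * T ^ 2 * (ε ^ (2 * (α - 1)) * ε ^ (1 - α) * ε ^ (1 - α)) := by
      calc σ * t * t ≤ (Cr * ε ^ (2 * (α - 1))) * (T * ε ^ (1 - α)) * (T * ε ^ (1 - α)) := by
            apply mul_le_mul (mul_le_mul hσle htT ht0 (by positivity)) htT ht0 (by positivity)
        _ = Cr * T ^ 2 * (ε ^ (2 * (α - 1)) * ε ^ (1 - α) * ε ^ (1 - α)) := by ring
    rw [key2, mul_one] at hσt
    have hχle : χ * σ * (t * (K * (2 * M * ε) ^ α) * t)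
        ≤ σ * t * t * (K * (2 * M * ε) ^ α) := by
      have hKp : (0:ℝ) ≤ σ * t * t * (K * (2 * M * ε) ^ α) := by positivity
      calc χ * σ * (t * (K * (2 * M * ε) ^ α) * t)
          = χ * (σ * t * t * (K * (2 * M * ε) ^ α)) := by ring
        _ ≤ 1 * (σ * t * t * (K * (2 * M * ε) ^ α)) := mul_le_mul_of_nonneg_right hχ1 hKp
        _ = σ * t * t * (K * (2 * M * ε) ^ α) := one_mul _
    calc χ * σ * (t * (K * (2 * M * ε) ^ α) * t) ≤ σ * t * t * (K * (2 * M * ε) ^ α) := hχle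
      _ ≤ Cr * T ^ 2 * (K * (2 * M * ε) ^ α) := by
          apply mul_le_mul_of_nonneg_right hσt (by positivity)
      _ = Cr * T ^ 2 * K * (2 * M) ^ α * ε ^ α := by rw [keyM]; ring
  -- assemble
  rw [hR t ⟨ht0, httε⟩]
  calc ‖t • R0' + R0 + (χ * σ) • ∫ s in (0:ℝ)..t, (t - s) • F s‖
      ≤ ‖t • R0'‖ + ‖R0‖ + ‖(χ * σ) • ∫ s in (0:ℝ)..t, (t - s) • F s‖ := norm_add₃_le
    _ = t * ‖R0'‖ + ‖R0‖ + χ * σ * ‖∫ s in (0:ℝ)..t, (t - s) • F s‖ := by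
        rw [norm_smul, norm_smul, Real.norm_eq_abs, Real.norm_eq_abs,
          abs_of_nonneg ht0, abs_of_nonneg (by positivity : (0:ℝ) ≤ χ * σ)]
    _ ≤ C * T * ε ^ α + C * ε ^ α + Cr * T ^ 2 * K * (2 * M) ^ α * ε ^ α := by
        refine add_le_add (add_le_add t1 hR0) ?_
        refine le_trans ?_ t3
        have := mul_le_mul_of_nonneg_left hint (by positivity : (0:ℝ) ≤ χ * σ)
        linarith
    _ = (C * T + C + Cr * T ^ 2 * K * (2 * M) ^ α) * ε ^ α := by ring
end
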